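/- Let B be a connected building set on S = {1, …, n+1} and let N be a maximal nested set of B. Then the vectors {e_I : I ∈ N} form a ℤ-basis of the lattice ℤ^n, where e_1, …, e_n is the standard basis, e_{n+1} = −e_1 − ⋯ − e_n, and e_I = Σ_{i ∈ I} e_i. In particular |N| = n and the cone ℝ_{≥0}N = Σ_{I ∈ N} ℝ_{≥0} e_I is an n-dimensional nonsingular (unimodular) cone. -/

import Mathlib

/-- A building set on a nonempty finite set `S`: a finite set of nonempty subsets of `S`
closed under unions of intersecting members, and containing all singletons. -/
def IsBuilding (S : Finset ℕ) (B : Finset (Finset ℕ)) : Prop :=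
  (∀ I ∈ B, I ⊆ S ∧ I.Nonempty) ∧
  (∀ I ∈ B, ∀ J ∈ B, (I ∩ J).Nonempty → I ∪ J ∈ B) ∧
  (∀ i ∈ S, ({i} : Finset ℕ) ∈ B)

/-- The set of maximal (by inclusion) elements of `B`. -/
def Bmax (B : Finset (Finset ℕ)) : Finset (Finset ℕ) :=
  B.filter (fun I => ∀ J ∈ B, I ⊆ J → I = J)

/-- The restriction `B|_C = {I ∈ B : I ⊆ C}`. -/
def restrict (B : Finset (Finset ℕ)) (C : Finset ℕ) : Finset (Finset ℕ) :=
  B.filter (fun I => I ⊆ C)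

/-- `N` is a nested set of `B`: a subset of `B \ Bmax B` whose members are pairwise
nested or disjoint, such that no union of `k ≥ 2` pairwise disjoint members lies in `B`. -/
def IsNested (B N : Finset (Finset ℕ)) : Prop :=
  N ⊆ B \ Bmax B ∧
  (∀ I ∈ N, ∀ J ∈ N, I ⊆ J ∨ J ⊆ I ∨ I ∩ J = ∅) ∧
  (∀ F ⊆ N, 2 ≤ F.card → (∀ I ∈ F, ∀ J ∈ F, I ≠ J → I ∩ J = ∅) → F.sup id ∉ B)

/-- `N` is a maximal (by inclusion) nested set of `B`. -/
def MaxNested (B N : Finset (Finset ℕ)) : Prop :=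
  IsNested B N ∧ ∀ N' : Finset (Finset ℕ), IsNested B N' → N ⊆ N' → N = N'

def FJ (Np : Finset (Finset ℕ)) (I : Finset ℕ) : Finset ℕ :=
  I.filter fun i => ∀ J ∈ Np, J ⊂ I → i ∉ J


lemma lam_min {Np : Finset (Finset ℕ)}
    (lam : ∀ I ∈ Np, ∀ J ∈ Np, I ⊆ J ∨ J ⊆ I ∨ I ∩ J = ∅)
    {K : Finset ℕ} {i : ℕ} (hK : K ∈ Np) (hi : i ∈ K) :
    ∃ I ∈ Np, i ∈ FJ Np I ∧ ∀ L ∈ Np, i ∈ L → I ⊆ L := by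
  have hne : (Np.filter (fun J => i ∈ J)).Nonempty := ⟨K, Finset.mem_filter.2 ⟨hK, hi⟩⟩
  obtain ⟨I, hImem, hImin⟩ := Finset.exists_min_image _ Finset.card hne
  rw [Finset.mem_filter] at hImem
  have hmin : ∀ L ∈ Np, i ∈ L → I ⊆ L := by
    intro L hL hiL
    rcases lam I hImem.1 L hL with h | h | h
    · exact h
    · have hc := hImin L (Finset.mem_filter.2 ⟨hL, hiL⟩)
      have h2 : L = I := Finset.eq_of_subset_of_card_le h hc
      rw [h2]
    · exact absurd (Finset.mem_inter.2 ⟨hImem.2, hiL⟩) (by simp [h])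
  refine ⟨I, hImem.1, Finset.mem_filter.2 ⟨hImem.2, ?_⟩, hmin⟩
  intro J hJ hJI hiJ
  exact hJI.ne (Finset.Subset.antisymm hJI.subset (hmin J hJ hiJ))

lemma FJ_unique {Np : Finset (Finset ℕ)}
    (lam : ∀ I ∈ Np, ∀ J ∈ Np, I ⊆ J ∨ J ⊆ I ∨ I ∩ J = ∅)
    {I I' : Finset ℕ} {i : ℕ} (hI : I ∈ Np) (hI' : I' ∈ Np)
    (h : i ∈ FJ Np I) (h' : i ∈ FJ Np I') : I = I' := by
  rw [FJ, Finset.mem_filter] at h h'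
  rcases lam I hI I' hI' with hc | hc | hc
  · by_contra hne
    exact h'.2 I hI (Finset.ssubset_iff_subset_ne.2 ⟨hc, hne⟩) h.1
  · by_contra hne
    exact h.2 I' hI' (Finset.ssubset_iff_subset_ne.2 ⟨hc, Ne.symm hne⟩) h'.1
  · exact absurd (Finset.mem_inter.2 ⟨h.1, h'.1⟩) (by simp [hc])

lemma FJ_nonempty {B N Np : Finset (Finset ℕ)} {I : Finset ℕ}
    (hN : IsNested B N) (hIB : I ∈ B) (hIne : I.Nonempty)
    (hsub : ∀ J ∈ Np, J ⊂ I → J ∈ N) : (FJ Np I).Nonempty := by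
  by_contra hne
  rw [Finset.not_nonempty_iff_eq_empty] at hne
  have hcov : ∀ i ∈ I, ∃ J ∈ N, J ⊂ I ∧ i ∈ J := by
    intro i hi
    by_contra hx
    push_neg at hx
    have : i ∈ FJ Np I :=
      Finset.mem_filter.2 ⟨hi, fun J hJ hJI hiJ => hx J (hsub J hJ hJI) hJI hiJ⟩
    simp [hne] at this
  set C := N.filter (fun J => J ⊂ I ∧ ∀ K ∈ N, K ⊂ I → J ⊆ K → J = K) with hC
  have hcovC : ∀ i ∈ I, ∃ J ∈ C, i ∈ J := by
    intro i hi
    obtain ⟨J0, hJ0N, hJ0I, hiJ0⟩ := hcov i hi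
    have hDne : (N.filter (fun K => K ⊂ I ∧ J0 ⊆ K)).Nonempty :=
      ⟨J0, Finset.mem_filter.2 ⟨hJ0N, hJ0I, Finset.Subset.refl _⟩⟩
    obtain ⟨K0, hK0, hK0max⟩ := Finset.exists_max_image _ Finset.card hDne
    rw [Finset.mem_filter] at hK0
    refine ⟨K0, Finset.mem_filter.2 ⟨hK0.1, hK0.2.1, ?_⟩, hK0.2.2 hiJ0⟩
    intro K hK hKI hK0K
    exact Finset.eq_of_subset_of_card_le hK0K
      (hK0max K (Finset.mem_filter.2 ⟨hK, hKI, hK0.2.2.trans hK0K⟩))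
  have hdisj : ∀ J ∈ C, ∀ J' ∈ C, J ≠ J' → J ∩ J' = ∅ := by
    intro J hJ J' hJ' hne'
    rw [hC, Finset.mem_filter] at hJ hJ'
    rcases hN.2.1 J hJ.1 J' hJ'.1 with h | h | h
    · exact absurd (hJ.2.2 J' hJ'.1 hJ'.2.1 h) hne'
    · exact absurd (hJ'.2.2 J hJ.1 hJ.2.1 h).symm hne'
    · exact h
  have hsup : C.sup id = I := by
    apply Finset.Subset.antisymm
    · show C.sup id ≤ I
      apply Finset.sup_le
      intro J hJ
      rw [hC, Finset.mem_filter] at hJ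
      exact hJ.2.1.subset
    · intro x hx
      obtain ⟨J, hJ, hxJ⟩ := hcovC x hx
      exact Finset.mem_sup.2 ⟨J, hJ, hxJ⟩
  obtain ⟨i, hi⟩ := hIne
  obtain ⟨J, hJ, hiJ⟩ := hcovC i hi
  have hCcard : 2 ≤ C.card := by
    by_contra h
    push_neg at h
    have h1 : C.card = 1 := le_antisymm (Nat.lt_succ_iff.1 h) (Finset.card_pos.2 ⟨J, hJ⟩)
    obtain ⟨a, ha⟩ := Finset.card_eq_one.1 h1
    rw [ha] at hsup
    simp only [Finset.sup_singleton, id] at hsup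
    have haC : a ∈ C := by rw [ha]; exact Finset.mem_singleton_self a
    rw [hC, Finset.mem_filter] at haC
    exact haC.2.1.ne hsup
  exact hN.2.2 C (Finset.filter_subset _ _) hCcard hdisj (hsup ▸ hIB)

lemma lam_insert {SS : Finset ℕ} {N : Finset (Finset ℕ)}
    (hsub : ∀ J ∈ N, J ⊆ SS) (hlam : ∀ I ∈ N, ∀ J ∈ N, I ⊆ J ∨ J ⊆ I ∨ I ∩ J = ∅) :
    ∀ I ∈ insert SS N, ∀ J ∈ insert SS N, I ⊆ J ∨ J ⊆ I ∨ I ∩ J = ∅ := by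
  intro I hI J hJ
  rcases Finset.mem_insert.1 hI with hI | hI
  · rcases Finset.mem_insert.1 hJ with hJ | hJ
    · exact Or.inl (hI ▸ hJ ▸ Finset.Subset.refl SS)
    · exact Or.inr (Or.inl (hI ▸ hsub J hJ))
  · rcases Finset.mem_insert.1 hJ with hJ | hJ
    · exact Or.inl (hJ ▸ hsub I hI)
    · exact hlam I hI J hJ

lemma FJ_singleton (n : ℕ) {B N : Finset (Finset ℕ)}
    (hB : IsBuilding (Finset.Icc 1 (n + 1)) B)
    (hconn : Bmax B = {Finset.Icc 1 (n + 1)})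
    (hN : MaxNested B N) {I : Finset ℕ}
    (hINp : I ∈ insert (Finset.Icc 1 (n+1)) N) :
    ∀ i ∈ FJ (insert (Finset.Icc 1 (n+1)) N) I,
      ∀ j ∈ FJ (insert (Finset.Icc 1 (n+1)) N) I, i = j := by
  set S := Finset.Icc 1 (n+1) with hSdef
  set Np := insert S N with hNpdef
  intro i hi j hj
  by_contra hij
  have hNB : ∀ J ∈ N, J ∈ B := fun J hJ => (Finset.mem_sdiff.1 (hN.1.1 hJ)).1
  have hNsub : ∀ J ∈ N, J ⊆ S := fun J hJ => (hB.1 J (hNB J hJ)).1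
  have hSB : S ∈ B := Finset.filter_subset _ _ (hconn ▸ Finset.mem_singleton_self S)
  have hIB : I ∈ B := by
    rcases Finset.mem_insert.1 hINp with rfl | h
    exacts [hSB, hNB I h]
  have hIS : I ⊆ S := (hB.1 I hIB).1
  rw [FJ, Finset.mem_filter] at hi hj
  have hiI : i ∈ I := hi.1
  have hjI : j ∈ I := hj.1
  have keyi : ∀ J ∈ Np, J ⊆ I → i ∈ J → J = I := by
    intro J hJ hJI hiJ
    by_contra hne'
    exact hi.2 J hJ (Finset.ssubset_iff_subset_ne.2 ⟨hJI, hne'⟩) hiJ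
  -- construct the maximal element M of B inside I \ {i} containing j
  have hjS : j ∈ S := hIS hjI
  have hR : ({j} : Finset ℕ) ∈ B.filter (fun J => J ⊆ I.erase i ∧ j ∈ J) := by
    refine Finset.mem_filter.2 ⟨hB.2.2 j hjS, ?_, Finset.mem_singleton_self j⟩
    rw [Finset.singleton_subset_iff]
    exact Finset.mem_erase.2 ⟨fun h => hij h.symm, hjI⟩
  obtain ⟨M, hM, hMmax0⟩ := Finset.exists_max_image _ Finset.card ⟨_, hR⟩
  rw [Finset.mem_filter] at hM
  obtain ⟨hMB, hMI, hjM⟩ := hM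
  have hMmax : ∀ U ∈ B, U ⊆ I.erase i → M ⊆ U → U = M := by
    intro U hU hUI hMU
    exact (Finset.eq_of_subset_of_card_le hMU
      (hMmax0 U (Finset.mem_filter.2 ⟨hU, hUI, hMU hjM⟩))).symm
  have habsorb : ∀ U ∈ B, U ⊆ I.erase i → (U ∩ M).Nonempty → U ⊆ M := by
    intro U hU hUI hUM
    have hun : U ∪ M ∈ B := hB.2.1 U hU M hMB hUM
    have he : U ∪ M = M := hMmax _ hun (Finset.union_subset hUI hMI) Finset.subset_union_right
    intro x hx
    rw [← he]
    exact Finset.mem_union_left _ hx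
  have hiM : i ∉ M := fun h => (Finset.mem_erase.1 (hMI h)).1 rfl
  have hMssub : M ⊂ I := Finset.ssubset_iff_subset_ne.2
    ⟨hMI.trans (Finset.erase_subset _ _), fun h => hiM (h.symm ▸ hiI)⟩
  have hMnotN : M ∉ N := fun hMN => hj.2 M (Finset.mem_insert_of_mem hMN) hMssub hjM
  have hMneS : M ≠ S := fun h => hiM (h.symm ▸ hIS hiI)
  have hnested : IsNested B (insert M N) := by
    refine ⟨?_, ?_, ?_⟩
    · intro J hJ
      rcases Finset.mem_insert.1 hJ with rfl | hJ
      · refine Finset.mem_sdiff.2 ⟨hMB, ?_⟩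
        rw [hconn]
        simpa using hMneS
      · exact hN.1.1 hJ
    · have key : ∀ K ∈ N, M ⊆ K ∨ K ⊆ M ∨ M ∩ K = ∅ := by
        intro K hK
        by_cases hdis : M ∩ K = ∅
        · exact Or.inr (Or.inr hdis)
        have hnedis : (K ∩ M).Nonempty := by
          rw [Finset.inter_comm]
          exact Finset.nonempty_iff_ne_empty.2 hdis
        rcases lam_insert hNsub hN.1.2.1 K (Finset.mem_insert_of_mem hK) I hINp with h | h | h
        · by_cases hiK : i ∈ K
          · have hKI : K = I := keyi K (Finset.mem_insert_of_mem hK) h hiK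
            exact Or.inl (hKI ▸ (hMI.trans (Finset.erase_subset _ _)))
          · have hKI : K ⊆ I.erase i := fun x hx =>
              Finset.mem_erase.2 ⟨fun e => hiK (e ▸ hx), h hx⟩
            exact Or.inr (Or.inl (habsorb K (hNB K hK) hKI hnedis))
        · exact Or.inl (hMI.trans ((Finset.erase_subset _ _).trans h))
        · obtain ⟨x, hx⟩ := hnedis
          rw [Finset.mem_inter] at hx
          exact absurd (Finset.mem_inter.2 ⟨hx.1, hMI.trans (Finset.erase_subset _ _) hx.2⟩)
            (by simp [h])
      intro J hJ K hK
      rcases Finset.mem_insert.1 hJ with rfl | hJ'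
      · rcases Finset.mem_insert.1 hK with rfl | hK'
        · exact Or.inl (Finset.Subset.refl _)
        · exact key K hK'
      · rcases Finset.mem_insert.1 hK with rfl | hK'
        · rcases key J hJ' with h | h | h
          exacts [Or.inr (Or.inl h), Or.inl h,
            Or.inr (Or.inr (by rwa [Finset.inter_comm] at h))]
        · exact hN.1.2.1 J hJ' K hK'
    · intro F hF h2 hdisj
      by_cases hMF : M ∈ F
      swap
      · exact hN.1.2.2 F
          (fun J hJ => (Finset.mem_insert.1 (hF hJ)).resolve_left (fun e => hMF (e ▸ hJ)))
          h2 hdisj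
      intro hUB
      set U := F.sup id with hU
      have hMU : M ⊆ U := Finset.le_sup (f := id) hMF
      set G := F.erase M with hG
      have hGN : ∀ J ∈ G, J ∈ N := by
        intro J hJ
        obtain ⟨hne', hJF⟩ := Finset.mem_erase.1 hJ
        exact (Finset.mem_insert.1 (hF hJF)).resolve_left hne'
      have hGne : G.Nonempty := by
        rw [← Finset.card_pos, hG, Finset.card_erase_of_mem hMF]
        omega
      have hGdisjM : ∀ J ∈ G, J ∩ M = ∅ := by
        intro J hJ
        obtain ⟨hne', hJF⟩ := Finset.mem_erase.1 hJ
        exact hdisj J hJF M hMF hne'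
      have hGcase : ∀ J ∈ G, J ∩ I = ∅ ∨ J ⊆ I.erase i := by
        intro J hJ
        have hJN := hGN J hJ
        rcases lam_insert hNsub hN.1.2.1 J (Finset.mem_insert_of_mem hJN) I hINp with h | h | h
        · by_cases hiJ : i ∈ J
          · exfalso
            have hJI : J = I := keyi J (Finset.mem_insert_of_mem hJN) h hiJ
            have : j ∈ J ∩ M := Finset.mem_inter.2 ⟨hJI.symm ▸ hjI, hjM⟩
            rw [hGdisjM J hJ] at this
            simp at this
          · exact Or.inr (fun x hx => Finset.mem_erase.2 ⟨fun e => hiJ (e ▸ hx), h hx⟩)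
        · exfalso
          have : j ∈ J ∩ M := Finset.mem_inter.2 ⟨h (hMI.trans (Finset.erase_subset _ _) hjM), hjM⟩
          rw [hGdisjM J hJ] at this
          simp at this
        · exact Or.inl h
      set Gout := G.filter (fun J => J ∩ I = ∅) with hGout
      by_cases hout : Gout.Nonempty
      · obtain ⟨J0, hJ0m⟩ := hout
        have hJ0 := Finset.mem_filter.1 hJ0m
        have hInotS : I ≠ S := by
          intro h
          have hJ0N := hGN J0 hJ0.1
          obtain ⟨x, hx⟩ := (hB.1 J0 (hNB J0 hJ0N)).2
          have : x ∈ J0 ∩ I := Finset.mem_inter.2 ⟨hx, h ▸ hNsub J0 hJ0N hx⟩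
          rw [hJ0.2] at this
          simp at this
        have hIN : I ∈ N := (Finset.mem_insert.1 hINp).resolve_left hInotS
        have hInotGout : I ∉ Gout := by
          intro h
          have h2' := (Finset.mem_filter.1 h).2
          have : i ∈ I ∩ I := Finset.mem_inter.2 ⟨hiI, hiI⟩
          rw [h2'] at this
          simp at this
        set H := insert I Gout with hH
        have hHsub : H ⊆ N := by
          intro J hJ
          rcases Finset.mem_insert.1 hJ with rfl | hJ
          · exact hIN
          · exact hGN J (Finset.mem_filter.1 hJ).1
        have hHcard : 2 ≤ H.card := by
          rw [hH, Finset.card_insert_of_notMem hInotGout]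
          have := Finset.card_pos.2 ⟨J0, hJ0m⟩
          omega
        have hHdisj : ∀ J ∈ H, ∀ K ∈ H, J ≠ K → J ∩ K = ∅ := by
          intro J hJ K hK hne'
          rcases Finset.mem_insert.1 hJ with rfl | hJ <;>
            rcases Finset.mem_insert.1 hK with rfl | hK
          · exact absurd rfl hne'
          · rw [Finset.inter_comm]
            exact (Finset.mem_filter.1 hK).2
          · exact (Finset.mem_filter.1 hJ).2
          · exact hdisj J (Finset.mem_erase.1 (Finset.mem_filter.1 hJ).1).2
              K (Finset.mem_erase.1 (Finset.mem_filter.1 hK).1).2 hne'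
        have hHsup : H.sup id = I ∪ U := by
          apply Finset.Subset.antisymm
          · show H.sup id ≤ I ∪ U
            apply Finset.sup_le
            intro J hJ
            rcases Finset.mem_insert.1 hJ with rfl | hJ
            · exact Finset.subset_union_left
            · show J ⊆ I ∪ U
              exact Finset.Subset.trans
                (Finset.le_sup (f := id) (Finset.mem_erase.1 (Finset.mem_filter.1 hJ).1).2)
                Finset.subset_union_right
          · intro x hx
            rcases Finset.mem_union.1 hx with hx | hx
            · exact Finset.mem_sup.2 ⟨I, Finset.mem_insert_self _ _, hx⟩
            · obtain ⟨J, hJF, hxJ⟩ := Finset.mem_sup.1 hx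
              by_cases hJM : J = M
              · subst hJM
                exact Finset.mem_sup.2 ⟨I, Finset.mem_insert_self _ _,
                  hMI.trans (Finset.erase_subset _ _) hxJ⟩
              · have hJG : J ∈ G := Finset.mem_erase.2 ⟨hJM, hJF⟩
                rcases hGcase J hJG with hc | hc
                · exact Finset.mem_sup.2 ⟨J,
                    Finset.mem_insert_of_mem (Finset.mem_filter.2 ⟨hJG, hc⟩), hxJ⟩
                · exact Finset.mem_sup.2 ⟨I, Finset.mem_insert_self _ _,
                    hc.trans (Finset.erase_subset _ _) hxJ⟩
        have hIU : I ∪ U ∈ B := hB.2.1 I hIB U hUB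
          ⟨j, Finset.mem_inter.2 ⟨hjI, hMU hjM⟩⟩
        exact hN.1.2.2 H hHsub hHcard hHdisj (hHsup ▸ hIU)
      · have hUsub : U ⊆ I.erase i := by
          show U ≤ I.erase i
          apply Finset.sup_le
          intro J hJF
          by_cases hJM : J = M
          · subst hJM; exact hMI
          · have hJG : J ∈ G := Finset.mem_erase.2 ⟨hJM, hJF⟩
            rcases hGcase J hJG with hc | hc
            · exact absurd ⟨J, Finset.mem_filter.2 ⟨hJG, hc⟩⟩ hout
            · exact hc
        have hUM : U = M := hMmax U hUB hUsub hMU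
        obtain ⟨J, hJ⟩ := hGne
        have hJU : J ⊆ U := Finset.le_sup (f := id) (Finset.mem_erase.1 hJ).2
        obtain ⟨x, hx⟩ := (hB.1 J (hNB J (hGN J hJ))).2
        have : x ∈ J ∩ M := Finset.mem_inter.2 ⟨hx, hUM ▸ hJU hx⟩
        rw [hGdisjM J hJ] at this
        simp at this
  have heq := hN.2 (insert M N) hnested (Finset.subset_insert _ _)
  exact hMnotN (by rw [heq]; exact Finset.mem_insert_self M N)

/-- Integral version of `eVec`. -/
def eVecZ (n : ℕ) (i : ℕ) : Fin n → ℤ :=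
  fun j => if i = (j : ℕ) + 1 then 1 else if i = n + 1 then -1 else 0

/-- `eSetZ n I = ∑ i ∈ I, e_i` over `ℤ`. -/
def eSetZ (n : ℕ) (I : Finset ℕ) : Fin n → ℤ := ∑ i ∈ I, eVecZ n i

/-- For a connected building set `B` on `S = {1, …, n+1}` and a maximal nested set `N`,
the vectors `e_I` for `I ∈ N` form a `ℤ`-basis of `ℤ^n` (so `|N| = n` and the cone on
`N` is unimodular). -/
theorem stmt_15 (n : ℕ) (B : Finset (Finset ℕ))
    (hB : IsBuilding (Finset.Icc 1 (n + 1)) B)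
    (hconn : Bmax B = {Finset.Icc 1 (n + 1)})
    (N : Finset (Finset ℕ)) (hN : MaxNested B N) :
    N.card = n ∧ ∃ b : Module.Basis (Fin n) ℤ (Fin n → ℤ),
      Set.range b = {v : Fin n → ℤ | ∃ I ∈ N, v = eSetZ n I} := by
  classical
  set S := Finset.Icc 1 (n+1) with hSdef
  set Np := insert S N with hNpdef
  have hNB : ∀ J ∈ N, J ∈ B := fun J hJ => (Finset.mem_sdiff.1 (hN.1.1 hJ)).1
  have hNsub : ∀ J ∈ N, J ⊆ S := fun J hJ => (hB.1 J (hNB J hJ)).1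
  have hSB : S ∈ B := Finset.filter_subset _ _ (hconn ▸ Finset.mem_singleton_self S)
  have hNpB : ∀ I ∈ Np, I ∈ B := by
    intro I hI
    rcases Finset.mem_insert.1 hI with h | h
    exacts [h ▸ hSB, hNB I h]
  have hNpsub : ∀ I ∈ Np, I ⊆ S := fun I hI => (hB.1 I (hNpB I hI)).1
  have hNpne : ∀ I ∈ Np, I.Nonempty := fun I hI => (hB.1 I (hNpB I hI)).2
  have hNneS : ∀ J ∈ N, J ≠ S := by
    intro J hJ
    have := (Finset.mem_sdiff.1 (hN.1.1 hJ)).2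
    rw [hconn] at this
    simpa using this
  have hSnotN : S ∉ N := fun h => hNneS S h rfl
  have lam := lam_insert hNsub hN.1.2.1
  have hFne : ∀ I ∈ Np, (FJ Np I).Nonempty := by
    intro I hI
    refine FJ_nonempty hN.1 (hNpB I hI) (hNpne I hI) ?_
    intro J hJ hJI
    rcases Finset.mem_insert.1 hJ with h | h
    · exfalso
      have h3 : S ⊂ I := h ▸ hJI
      exact (Finset.ssubset_iff_subset_ne.1 h3).2
        (Finset.Subset.antisymm h3.subset (hNpsub I hI))
    · exact h
  have hsig : ∀ I, ∃ a, I ∈ Np → FJ Np I = {a} := by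
    intro I
    by_cases hI : I ∈ Np
    · obtain ⟨a, ha⟩ := hFne I hI
      refine ⟨a, fun _ => Finset.eq_singleton_iff_unique_mem.2 ⟨ha, fun b hb => ?_⟩⟩
      exact FJ_singleton n hB hconn hN hI b hb a ha
    · exact ⟨0, fun h => absurd h hI⟩
  choose σ hσ using hsig
  have hσmem : ∀ I ∈ Np, σ I ∈ FJ Np I := by
    intro I hI
    rw [hσ I hI]
    exact Finset.mem_singleton_self _
  have hσI : ∀ I ∈ Np, σ I ∈ I := fun I hI => (Finset.mem_filter.1 (hσmem I hI)).1
  have hinj : ∀ I ∈ Np, ∀ J ∈ Np, σ I = σ J → I = J := by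
    intro I hI J hJ he
    exact FJ_unique lam hI hJ (hσmem I hI) (by rw [he]; exact hσmem J hJ)
  have hdecomp : ∀ I ∈ Np, I = (Np.filter (fun J => J ⊆ I)).image σ := by
    intro I hI
    apply Finset.Subset.antisymm
    · intro x hx
      obtain ⟨J, hJ, hxF, hmin⟩ := lam_min lam hI hx
      have hJI : J ⊆ I := hmin I hI hx
      have hxσ : x = σ J := by
        have h := hσ J hJ
        rw [h, Finset.mem_singleton] at hxF
        exact hxF
      exact Finset.mem_image.2 ⟨J, Finset.mem_filter.2 ⟨hJ, hJI⟩, hxσ.symm⟩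
    · intro x hx
      obtain ⟨J, hJ, hxe⟩ := Finset.mem_image.1 hx
      rw [Finset.mem_filter] at hJ
      exact hJ.2 (hxe ▸ hσI J hJ.1)
  have hScard : S.card = n + 1 := by rw [hSdef, Nat.card_Icc]; omega
  have hNpfilterS : Np.filter (fun J => J ⊆ S) = Np :=
    Finset.filter_true_of_mem (fun J hJ => hNpsub J hJ)
  have himgS : S = Np.image σ := by
    have h := hdecomp S (Finset.mem_insert_self _ _)
    rwa [hNpfilterS] at h
  have hcardNp : Np.card = n + 1 := by
    calc Np.card = (Np.image σ).card :=
          (Finset.card_image_of_injOn (fun I hI J hJ h => hinj I hI J hJ h)).symm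
      _ = S.card := by rw [← himgS]
      _ = n + 1 := hScard
  have hcardN : N.card = n := by
    have h := Finset.card_insert_of_notMem hSnotN
    rw [← hNpdef] at h
    omega
  refine ⟨hcardN, ?_⟩
  -- algebra
  have hsumid : ∀ I ∈ Np, eSetZ n I = ∑ J ∈ Np.filter (fun J => J ⊆ I), eVecZ n (σ J) := by
    intro I hI
    have hinj' : ∀ x ∈ Np.filter (fun J => J ⊆ I), ∀ y ∈ Np.filter (fun J => J ⊆ I),
        σ x = σ y → x = y :=
      fun x hx y hy h => hinj x (Finset.mem_filter.1 hx).1 y (Finset.mem_filter.1 hy).1 h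
    show (∑ i ∈ I, eVecZ n i) = _
    conv_lhs => rw [hdecomp I hI]
    exact Finset.sum_image hinj'
  set P := Submodule.span ℤ {v : Fin n → ℤ | ∃ I ∈ N, v = eSetZ n I} with hP
  have hgen : ∀ I ∈ N, eSetZ n I ∈ P := fun I hI => Submodule.subset_span ⟨I, hI, rfl⟩
  have hfilterNp : ∀ I ∈ N, Np.filter (fun J => J ⊆ I) = N.filter (fun J => J ⊆ I) := by
    intro I hI
    rw [hNpdef, Finset.filter_insert, if_neg]
    intro h
    exact hNneS I hI (Finset.Subset.antisymm (hNsub I hI) h)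
  have claim1 : ∀ m : ℕ, ∀ I ∈ N, I.card ≤ m → eVecZ n (σ I) ∈ P := by
    intro m
    induction m with
    | zero =>
      intro I hI hc
      obtain ⟨x, hx⟩ := (hB.1 I (hNB I hI)).2
      rw [Nat.le_zero, Finset.card_eq_zero] at hc
      simp [hc] at hx
    | succ m ih =>
      intro I hI hc
      have hidI : eSetZ n I = ∑ J ∈ N.filter (fun J => J ⊆ I), eVecZ n (σ J) := by
        rw [← hfilterNp I hI]
        exact hsumid I (Finset.mem_insert_of_mem hI)
      have hImem : I ∈ N.filter (fun J => J ⊆ I) :=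
        Finset.mem_filter.2 ⟨hI, Finset.Subset.refl I⟩
      rw [← Finset.add_sum_erase _ _ hImem] at hidI
      have hrest : ∑ J ∈ (N.filter (fun J => J ⊆ I)).erase I, eVecZ n (σ J) ∈ P := by
        apply Submodule.sum_mem
        intro J hJ
        obtain ⟨hne', hJf⟩ := Finset.mem_erase.1 hJ
        rw [Finset.mem_filter] at hJf
        have hss : J ⊂ I := Finset.ssubset_iff_subset_ne.2 ⟨hJf.2, hne'⟩
        have hlt := Finset.card_lt_card hss
        exact ih J hJf.1 (by omega)
      have hrw : eVecZ n (σ I)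
          = eSetZ n I - ∑ J ∈ (N.filter (fun J => J ⊆ I)).erase I, eVecZ n (σ J) := by
        rw [hidI]; abel
      rw [hrw]
      exact Submodule.sub_mem _ (hgen I hI) hrest
  have hzero : eSetZ n S = 0 := by
    funext k
    have hkn := k.isLt
    have hS' : S = insert (n+1) (Finset.Icc 1 n) := by
      rw [hSdef]
      ext x
      simp only [Finset.mem_Icc, Finset.mem_insert]
      omega
    have hnot : (n+1) ∉ Finset.Icc 1 n := by simp
    simp only [eSetZ, Finset.sum_apply, hS', Finset.sum_insert hnot]
    have h1 : ∀ i ∈ Finset.Icc 1 n, eVecZ n i k = if i = (k:ℕ)+1 then 1 else 0 := by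
      intro i hi
      rw [Finset.mem_Icc] at hi
      have hne : i ≠ n + 1 := by omega
      simp [eVecZ, hne]
    rw [Finset.sum_congr rfl h1, Finset.sum_ite_eq' (Finset.Icc 1 n) ((k:ℕ)+1) (fun _ => (1:ℤ))]
    have hmem : (k:ℕ)+1 ∈ Finset.Icc 1 n := by
      rw [Finset.mem_Icc]; omega
    have hval : eVecZ n (n+1) k = -1 := by
      have : n + 1 ≠ (k:ℕ) + 1 := by omega
      simp [eVecZ, this]; omega
    rw [hval, if_pos hmem]
    simp
  have hsumNp : eVecZ n (σ S) + ∑ J ∈ N, eVecZ n (σ J) = 0 := by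
    have h := hsumid S (Finset.mem_insert_self _ _)
    rw [hNpfilterS, hzero] at h
    have hSNp : S ∈ Np := Finset.mem_insert_self _ _
    rw [← Finset.add_sum_erase _ _ hSNp] at h
    rw [hNpdef, Finset.erase_insert hSnotN] at h
    exact h.symm
  have hallvec : ∀ t ∈ S, eVecZ n t ∈ P := by
    intro t ht
    rw [himgS] at ht
    obtain ⟨J, hJ, hJt⟩ := Finset.mem_image.1 ht
    rcases Finset.mem_insert.1 hJ with h | h
    · rw [← hJt, h]
      have hneg : eVecZ n (σ S) = -∑ J ∈ N, eVecZ n (σ J) :=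
        eq_neg_of_add_eq_zero_left hsumNp
      rw [hneg]
      exact Submodule.neg_mem _
        (Submodule.sum_mem _ (fun J hJ => claim1 J.card J hJ le_rfl))
    · rw [← hJt]
      exact claim1 J.card J h le_rfl
  have hstd : ∀ k : Fin n, (Pi.basisFun ℤ (Fin n)) k = eVecZ n ((k:ℕ)+1) := by
    intro k
    funext l
    have hkn := k.isLt
    have h2 : (k:ℕ) + 1 ≠ n + 1 := by omega
    by_cases hkl : k = l
    · subst hkl
      simp [Pi.basisFun_apply, Pi.single, Function.update, eVecZ]
    · have h3 : (k:ℕ) + 1 ≠ (l:ℕ) + 1 := by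
        intro h
        exact hkl (Fin.ext (by omega))
      simp [Pi.basisFun_apply, Pi.single, Function.update, eVecZ, h2, h3, Ne.symm hkl]
      rw [if_neg (fun h => hkl (Fin.ext h)), if_neg (by omega)]
  have hPtop : P = ⊤ := by
    rw [eq_top_iff, ← (Pi.basisFun ℤ (Fin n)).span_eq, Submodule.span_le]
    rintro x ⟨k, rfl⟩
    rw [hstd k]
    have hkn := k.isLt
    exact hallvec _ (by rw [hSdef, Finset.mem_Icc]; omega)
  have e := N.equivFinOfCardEq hcardN
  set v : Fin n → (Fin n → ℤ) := fun k => eSetZ n ((e.symm k : Finset ℕ)) with hv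
  set f := (Pi.basisFun ℤ (Fin n)).constr ℕ v with hf
  have hrangeset : Set.range v = {w : Fin n → ℤ | ∃ I ∈ N, w = eSetZ n I} := by
    ext x
    constructor
    · rintro ⟨k, rfl⟩
      exact ⟨(e.symm k : Finset ℕ), (e.symm k).2, rfl⟩
    · rintro ⟨I, hI, rfl⟩
      exact ⟨e ⟨I, hI⟩, by simp [hv]⟩
  have hrange : LinearMap.range f = P := by
    rw [hf, Module.Basis.constr_range, hrangeset]
  have hsurj : Function.Surjective f := by
    rw [← LinearMap.range_eq_top, hrange, hPtop]
  have hinjf : Function.Injective f :=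
    OrzechProperty.injective_of_surjective_endomorphism f hsurj
  let eqv := LinearEquiv.ofBijective f ⟨hinjf, hsurj⟩
  have hb : ∀ k, ((Pi.basisFun ℤ (Fin n)).map eqv) k = v k := by
    intro k
    rw [Module.Basis.map_apply]
    show eqv ((Pi.basisFun ℤ (Fin n)) k) = v k
    show f ((Pi.basisFun ℤ (Fin n)) k) = v k
    rw [hf, Module.Basis.constr_basis]
  refine ⟨(Pi.basisFun ℤ (Fin n)).map eqv, ?_⟩
  ext x
  simp only [Set.mem_range, Set.mem_setOf_eq]
  constructor
  · rintro ⟨k, rfl⟩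
    rw [hb k]
    exact ⟨(e.symm k : Finset ℕ), (e.symm k).2, rfl⟩
  · rintro ⟨I, hI, rfl⟩
    refine ⟨e ⟨I, hI⟩, ?_⟩
    rw [hb]
    simp [hv]
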